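/- Let A be the real symmetric block matrix A = [[M, E], [Eᵀ, B]], where M is a symmetric positive definite matrix of order r all of whose off-diagonal entries are nonpositive (equivalently, M is a nonsingular symmetric M-matrix), B is symmetric of order n−r, and E is an r×(n−r) matrix with all entries nonpositive. Let A/M = B − EᵀM⁻¹E denote the Schur complement of M in A. Then: (i) A is copositive if and only if A/M is copositive; (ii) A is SPN if and only if A/M is SPN. -/

import Mathlib

open Matrix

/-- A real symmetric matrix `A` is *copositive* if `xᵀAx ≥ 0` for every
entrywise nonnegative vector `x`. -/
def Copositive {ι : Type*} [Fintype ι] (A : Matrix ι ι ℝ) : Prop :=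
  ∀ x : ι → ℝ, (∀ i, 0 ≤ x i) → 0 ≤ x ⬝ᵥ A.mulVec x

/-- A real symmetric matrix is *SPN* if it is the sum of a positive semidefinite
matrix and a symmetric entrywise nonnegative matrix. -/
def IsSPN {ι : Type*} [Fintype ι] (A : Matrix ι ι ℝ) : Prop :=
  ∃ P N : Matrix ι ι ℝ, P.PosSemidef ∧ N.IsSymm ∧ (∀ i j, 0 ≤ N i j) ∧ A = P + N

/-- Inverse positivity for nonsingular symmetric M-matrices. -/
lemma Mmatrix_inv_mulVec_nonneg {r : ℕ} {M : Matrix (Fin r) (Fin r) ℝ} (hM : M.PosDef)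
    (hMoff : ∀ i j, i ≠ j → M i j ≤ 0) (b : Fin r → ℝ) (hb : ∀ k, 0 ≤ b k) :
    ∀ i, 0 ≤ M⁻¹.mulVec b i := by
  have hdet : IsUnit M.det := (Matrix.isUnit_iff_isUnit_det M).mp hM.isUnit
  set x := M⁻¹.mulVec b with hx
  have hMx : M.mulVec x = b := by
    rw [hx, mulVec_mulVec, Matrix.mul_nonsing_inv _ hdet, one_mulVec]
  set xm : Fin r → ℝ := fun i => max (-(x i)) 0 with hxm
  have hxm0 : ∀ i, 0 ≤ xm i := fun i => le_max_right _ _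
  have hplus : ∀ j, 0 ≤ xm j + x j := by
    intro j
    rcases le_or_gt 0 (x j) with h | h
    · have : (0:ℝ) ≤ xm j := hxm0 j; linarith
    · have : xm j = -x j := max_eq_left (by linarith)
      simp [this]
  have hdiag : ∀ i, xm i * (xm i + x i) = 0 := by
    intro i
    rcases le_or_gt 0 (x i) with h | h
    · have : xm i = 0 := max_eq_right (by linarith)
      simp [this]
    · have : xm i = -x i := max_eq_left (by linarith)
      rw [this]; ring
  have key : xm ⬝ᵥ M.mulVec xm + xm ⬝ᵥ M.mulVec x ≤ 0 := by
    have hrw : xm ⬝ᵥ M.mulVec xm + xm ⬝ᵥ M.mulVec x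
        = ∑ i, ∑ j, M i j * (xm i * (xm j + x j)) := by
      simp only [dotProduct, mulVec, Finset.mul_sum, ← Finset.sum_add_distrib]
      refine Finset.sum_congr rfl fun i _ => Finset.sum_congr rfl fun j _ => ?_
      ring
    rw [hrw]
    refine Finset.sum_nonpos fun i _ => Finset.sum_nonpos fun j _ => ?_
    rcases eq_or_ne i j with rfl | hij
    · rw [hdiag i, mul_zero]
    · exact mul_nonpos_of_nonpos_of_nonneg (hMoff i j hij)
        (mul_nonneg (hxm0 i) (hplus j))
  have hb' : 0 ≤ xm ⬝ᵥ M.mulVec x := by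
    rw [hMx]
    exact Finset.sum_nonneg fun i _ => mul_nonneg (hxm0 i) (hb i)
  have hquad : xm ⬝ᵥ M.mulVec xm ≤ 0 := by linarith
  have hxm_zero : xm = 0 := by
    by_contra hne
    have h := hM.dotProduct_mulVec_pos hne
    simp only [star_trivial] at h
    have h2 : (0:ℝ) < xm ⬝ᵥ M.mulVec xm := by simpa using h
    linarith
  intro i
  by_contra hneg
  push_neg at hneg
  have h1 : xm i = -(x i) := max_eq_left (by linarith)
  have h2 : xm i = 0 := congrFun hxm_zero i
  rw [h1] at h2; linarith

/-- For a symmetric block matrix `A = [[M, E], [Eᵀ, B]]` where `M` is a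
nonsingular symmetric M-matrix (positive definite with nonpositive off-diagonal
entries) and `E ≤ 0`: `A` is copositive iff the Schur complement `A/M = B - EᵀM⁻¹E`
is copositive, and `A` is SPN iff `A/M` is SPN. -/
theorem fromBlocks_copositive_and_isSPN_iff_schur_of_Mmatrix_block
    (r s : ℕ) (M : Matrix (Fin r) (Fin r) ℝ) (B : Matrix (Fin s) (Fin s) ℝ)
    (E : Matrix (Fin r) (Fin s) ℝ) (hM : M.PosDef)
    (hMoff : ∀ i j, i ≠ j → M i j ≤ 0)
    (hB : B.IsSymm) (hE : ∀ i j, E i j ≤ 0) :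
    (Copositive (Matrix.fromBlocks M E Eᵀ B) ↔ Copositive (B - Eᵀ * M⁻¹ * E)) ∧
    (IsSPN (Matrix.fromBlocks M E Eᵀ B) ↔ IsSPN (B - Eᵀ * M⁻¹ * E)) := by
  haveI : Invertible M := hM.isUnit.invertible
  have hdet : IsUnit M.det := (Matrix.isUnit_iff_isUnit_det M).mp hM.isUnit
  set A := Matrix.fromBlocks M E Eᵀ B with hA
  set S := B - Eᵀ * M⁻¹ * E with hSdef
  set F := -(M⁻¹ * E) with hFdef
  have hF : ∀ i j, 0 ≤ F i j := by
    intro i j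
    have h := Mmatrix_inv_mulVec_nonneg hM hMoff (fun k => -E k j)
      (fun k => neg_nonneg.mpr (hE k j)) i
    have h2 : M⁻¹.mulVec (fun k => -E k j) i = F i j := by
      simp [hFdef, mulVec, dotProduct, Matrix.mul_apply, mul_neg]
    rwa [h2] at h
  have hMinvT : M⁻¹ᵀ = M⁻¹ := by
    rw [Matrix.transpose_nonsing_inv]
    congr 1
    rw [← Matrix.conjTranspose_eq_transpose_of_trivial]
    exact hM.isHermitian
  have hMF : M * F = -E := by
    rw [hFdef, Matrix.mul_neg, ← Matrix.mul_assoc, Matrix.mul_nonsing_inv _ hdet,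
      Matrix.one_mul]
  set C := Matrix.fromBlocks (0 : Matrix (Fin r) (Fin r) ℝ) F
    (0 : Matrix (Fin s) (Fin r) ℝ) (1 : Matrix (Fin s) (Fin s) ℝ) with hCdef
  have hC0 : ∀ p q, 0 ≤ C p q := by
    rintro (i | i) (j | j)
    · simp [hCdef]
    · simpa [hCdef] using hF i j
    · simp [hCdef]
    · rcases eq_or_ne i j with rfl | h
      · simp [hCdef, Matrix.one_apply]
      · simp [hCdef, Matrix.one_apply, h]
  have hAC : A * C = Matrix.fromBlocks 0 0 0 S := by
    rw [hA, hCdef, fromBlocks_multiply]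
    have h1 : M * F + E * (1 : Matrix (Fin s) (Fin s) ℝ) = 0 := by rw [Matrix.mul_one, hMF]; abel
    have h2 : Eᵀ * F + B * (1 : Matrix (Fin s) (Fin s) ℝ) = S := by
      rw [Matrix.mul_one, hFdef, Matrix.mul_neg, ← Matrix.mul_assoc, hSdef]
      abel
    rw [h1, h2]
    simp
  have hCAC : Cᵀ * A * C = Matrix.fromBlocks 0 0 0 S := by
    rw [Matrix.mul_assoc, hAC, hCdef, fromBlocks_transpose, fromBlocks_multiply]
    simp
  have hquad : ∀ z : Fin r ⊕ Fin s → ℝ,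
      z ⬝ᵥ (Cᵀ * A * C).mulVec z = (C.mulVec z) ⬝ᵥ A.mulVec (C.mulVec z) := by
    intro z
    rw [← Matrix.mulVec_mulVec, ← Matrix.mulVec_mulVec, Matrix.dotProduct_mulVec,
      Matrix.vecMul_transpose]
  have cop_mp : Copositive A → Copositive S := by
    intro hA' y hy
    set z : Fin r ⊕ Fin s → ℝ := Sum.elim 0 y with hz
    have hCz : C.mulVec z = Sum.elim (F.mulVec y) y := by
      rw [hCdef, hz, fromBlocks_mulVec]
      simp
    have hCz0 : ∀ p, 0 ≤ C.mulVec z p := by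
      rw [hCz]; rintro (i | i)
      · simp only [Sum.elim_inl, Matrix.mulVec, dotProduct]
        exact Finset.sum_nonneg fun j _ => mul_nonneg (hF i j) (hy j)
      · exact hy i
    have h1 := hA' _ hCz0
    rw [← hquad z, hCAC] at h1
    rw [hz, fromBlocks_mulVec] at h1
    simpa [sumElim_dotProduct_sumElim, Sum.elim_comp_inl, Sum.elim_comp_inr] using h1
  have hLDU : A = (Matrix.fromBlocks 1 (M⁻¹ * E) 0 1)ᵀ * Matrix.fromBlocks M 0 0 S *
      Matrix.fromBlocks 1 (M⁻¹ * E) 0 1 := by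
    have h := Matrix.fromBlocks_eq_of_invertible₁₁ M E Eᵀ B
    rw [Matrix.invOf_eq_nonsing_inv] at h
    have hUt : (Matrix.fromBlocks (1 : Matrix (Fin r) (Fin r) ℝ) (M⁻¹ * E)
        (0 : Matrix (Fin s) (Fin r) ℝ) (1 : Matrix (Fin s) (Fin s) ℝ))ᵀ
        = Matrix.fromBlocks 1 0 (Eᵀ * M⁻¹) 1 := by
      rw [fromBlocks_transpose, Matrix.transpose_mul, hMinvT]
      simp
    rw [hA, h, ← hSdef, ← hUt]
  have cop_mpr : Copositive S → Copositive A := by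
    intro hS' x hx
    set U := Matrix.fromBlocks (1 : Matrix (Fin r) (Fin r) ℝ) (M⁻¹ * E)
      (0 : Matrix (Fin s) (Fin r) ℝ) (1 : Matrix (Fin s) (Fin s) ℝ) with hU
    have key : x ⬝ᵥ A.mulVec x
        = (U.mulVec x) ⬝ᵥ (Matrix.fromBlocks M 0 0 S).mulVec (U.mulVec x) := by
      conv_lhs => rw [hLDU]
      rw [← Matrix.mulVec_mulVec, ← Matrix.mulVec_mulVec, Matrix.dotProduct_mulVec,
        Matrix.vecMul_transpose]
    rw [key]
    set u := x ∘ Sum.inl with hu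
    set y := x ∘ Sum.inr with hy
    have hx' : x = Sum.elim u y := (Sum.elim_comp_inl_inr x).symm
    have hUx : U.mulVec x = Sum.elim (u + (M⁻¹ * E).mulVec y) y := by
      conv_lhs => rw [hx']
      rw [hU, fromBlocks_mulVec]
      simp
    rw [hUx, fromBlocks_mulVec]
    simp only [Sum.elim_comp_inl, Sum.elim_comp_inr, Matrix.zero_mulVec,
      Matrix.mulVec_zero, add_zero, zero_add]
    rw [sumElim_dotProduct_sumElim]
    have t1 : 0 ≤ (u + (M⁻¹ * E).mulVec y) ⬝ᵥ M.mulVec (u + (M⁻¹ * E).mulVec y) := by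
      have h := hM.posSemidef.dotProduct_mulVec_nonneg (u + (M⁻¹ * E).mulVec y)
      simpa using h
    have t2 : 0 ≤ y ⬝ᵥ S.mulVec y := hS' y fun i => hx (Sum.inr i)
    linarith
  have spn_mp : IsSPN A → IsSPN S := by
    rintro ⟨P, N, hP, hNs, hN0, hPN⟩
    have hsplit : Matrix.fromBlocks 0 0 0 S = Cᵀ * P * C + Cᵀ * N * C := by
      rw [← hCAC, hPN, Matrix.mul_add, Matrix.add_mul]
    refine ⟨(Cᵀ * P * C).submatrix Sum.inr Sum.inr,
      (Cᵀ * N * C).submatrix Sum.inr Sum.inr, ?_, ?_, ?_, ?_⟩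
    · have h := hP.conjTranspose_mul_mul_same C
      rw [Matrix.conjTranspose_eq_transpose_of_trivial] at h
      exact h.submatrix _
    · have hsymm : (Cᵀ * N * C)ᵀ = Cᵀ * N * C := by
        rw [Matrix.transpose_mul, Matrix.transpose_mul, Matrix.transpose_transpose,
          hNs.eq, ← Matrix.mul_assoc]
      show ((Cᵀ * N * C).submatrix Sum.inr Sum.inr)ᵀ = _
      ext i j
      simp only [Matrix.transpose_apply, Matrix.submatrix_apply]
      exact congrFun (congrFun hsymm (Sum.inr i)) (Sum.inr j)
    · intro i j
      simp only [Matrix.submatrix_apply, Matrix.mul_apply, Matrix.transpose_apply]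
      refine Finset.sum_nonneg fun k _ => mul_nonneg ?_ (hC0 k (Sum.inr j))
      exact Finset.sum_nonneg fun l _ => mul_nonneg (hC0 l (Sum.inr i)) (hN0 l k)
    · ext i j
      have h := congrFun (congrFun hsplit (Sum.inr i)) (Sum.inr j)
      simpa using h
  have spn_mpr : IsSPN S → IsSPN A := by
    rintro ⟨P, N, hP, hNs, hN0, hPN⟩
    have hB' : B = Eᵀ * M⁻¹ * E + P + N := by
      have h : B - Eᵀ * M⁻¹ * E = P + N := by rw [← hSdef, hPN]
      have h2 : B = P + N + Eᵀ * M⁻¹ * E := by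
        rw [← h]; abel
      rw [h2]; abel
    refine ⟨Matrix.fromBlocks M E Eᵀ (Eᵀ * M⁻¹ * E + P),
      Matrix.fromBlocks 0 0 0 N, ?_, ?_, ?_, ?_⟩
    · have hiff := Matrix.PosDef.fromBlocks₁₁ (A := M) E (Eᵀ * M⁻¹ * E + P) hM
      rw [Matrix.conjTranspose_eq_transpose_of_trivial] at hiff
      rw [hiff, add_sub_cancel_left]
      exact hP
    · show (Matrix.fromBlocks 0 0 0 N)ᵀ = _
      simp [fromBlocks_transpose, hNs.eq]
    · rintro (i | i) (j | j) <;> simp [hN0]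
    · rw [hA, fromBlocks_add]
      simp only [add_zero]
      congr 1
  exact ⟨⟨cop_mp, cop_mpr⟩, ⟨spn_mp, spn_mpr⟩⟩
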